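/- arXiv:2511.16367 — 2 statements merged into one kernel-verified Lean document; each statement's English description precedes it below -/
import Mathlib

section
/- In the symmetric two-player game on ℕ × ℕ where player 1 receives payoff 1/m when playing m against an opponent action n < m and 0 otherwise (u₁(m,n) = 1/m if n < m, else 0), with both players using charges on ℕ: a pair of strategies (κ₁,κ₂) is a Nash equilibrium if and only if both κ₁ and κ₂ are diffuse charges, and every Nash equilibrium yields payoff 0 to both players. In particular, this game has no Nash equilibrium in countably additive strategies. -/
/-- A charge: a finitely additive probability measure on the powerset of `α`. -/
structure IsCharge {α : Type*} (κ : Set α → ℝ) : Prop where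
  nonneg : ∀ E, 0 ≤ κ E
  empty : κ ∅ = 0
  total : κ Set.univ = 1
  additive : ∀ E G, Disjoint E G → κ (E ∪ G) = κ E + κ G

/-- A charge is diffuse if every singleton has measure zero. -/
def Diffuse {α : Type*} (κ : Set α → ℝ) : Prop := ∀ a : α, κ {a} = 0

/-- A charge on `ℕ` (here `ℕ = {1,2,…}`, i.e. `ℕ+`) is countably additive if it is determined
by its values on singletons. -/
def CountablyAdditive (κ : Set ℕ+ → ℝ) : Prop :=
  ∀ E : Set ℕ+, κ E = ∑' k : E, κ {(k : ℕ+)}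

/-- The integral of a bounded function against a charge, via lower simple sums. -/
noncomputable def chargeIntegral {α : Type*} (κ : Set α → ℝ) (u : α → ℝ) : ℝ :=
  sSup {r | ∃ g : α → ℝ, ∃ hg : (Set.range g).Finite,
    (∀ a, g a ≤ u a) ∧ r = ∑ c ∈ hg.toFinset, c * κ (g ⁻¹' {c})}

/-- The payoff of a player choosing `m` against an opponent choosing `n`:
`1/m` if `n < m`, and `0` otherwise. -/
noncomputable def waldu (m n : ℕ+) : ℝ := if n < m then 1 / ((m : ℕ) : ℝ) else 0

/-- Expected payoff of player 1 (own strategy `κ₁`, opponent `κ₂`). -/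
noncomputable def U1 (κ₁ κ₂ : Set ℕ+ → ℝ) : ℝ :=
  chargeIntegral κ₁ (fun m => chargeIntegral κ₂ (fun n => waldu m n))

/-- Expected payoff of player 2 (opponent `κ₁`, own strategy `κ₂`). -/
noncomputable def U2 (κ₁ κ₂ : Set ℕ+ → ℝ) : ℝ :=
  chargeIntegral κ₂ (fun n => chargeIntegral κ₁ (fun m => waldu n m))

/-- Nash equilibrium: mutual best responses over all charges. -/
def NashEq (κ₁ κ₂ : Set ℕ+ → ℝ) : Prop :=
  (∀ τ₁ : Set ℕ+ → ℝ, IsCharge τ₁ → U1 τ₁ κ₂ ≤ U1 κ₁ κ₂) ∧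
  (∀ τ₂ : Set ℕ+ → ℝ, IsCharge τ₂ → U2 κ₁ τ₂ ≤ U2 κ₁ κ₂)

section ChargeAux

open Set

variable {α : Type*} {κ : Set α → ℝ}

lemma IsCharge.mono (hκ : IsCharge κ) {A B : Set α} (h : A ⊆ B) : κ A ≤ κ B := by
  have h2 : κ B = κ A + κ (B \ A) := by
    rw [← hκ.additive A (B \ A) disjoint_sdiff_right, Set.union_diff_cancel h]
  nlinarith [hκ.nonneg (B \ A)]

lemma IsCharge.le_one (hκ : IsCharge κ) (A : Set α) : κ A ≤ 1 := by
  simpa [hκ.total] using hκ.mono (subset_univ A)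

lemma IsCharge.compl (hκ : IsCharge κ) (A : Set α) : κ Aᶜ = 1 - κ A := by
  have := hκ.additive A Aᶜ disjoint_compl_right
  rw [Set.union_compl_self, hκ.total] at this
  linarith

lemma IsCharge.inter_add (hκ : IsCharge κ) (P A : Set α) :
    κ P = κ (P ∩ A) + κ (P ∩ Aᶜ) := by
  rw [← hκ.additive _ _ (Disjoint.mono inter_subset_right inter_subset_right disjoint_compl_right),
    ← Set.inter_union_distrib_left, Set.union_compl_self, Set.inter_univ]

lemma charge_preimage_sum (hκ : IsCharge κ) (g : α → ℝ) (A : Set α) (s : Finset ℝ) :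
    ∑ c ∈ s, κ (g ⁻¹' {c} ∩ A) = κ (g ⁻¹' ↑s ∩ A) := by
  classical
  induction s using Finset.induction with
  | empty => simp [hκ.empty]
  | insert _ _ hc ih =>
    rename_i c s
    rw [Finset.sum_insert hc, ih, Finset.coe_insert, Set.insert_eq, Set.preimage_union,
      Set.union_inter_distrib_right, hκ.additive]
    rw [Set.disjoint_left]
    rintro x ⟨hx1, -⟩ ⟨hx2, -⟩
    exact hc (by simpa using mem_preimage.mp hx1 ▸ (by simpa using hx2))

def LSet (κ : Set α → ℝ) (u : α → ℝ) : Set ℝ :=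
  {r | ∃ g : α → ℝ, ∃ hg : (Set.range g).Finite,
    (∀ a, g a ≤ u a) ∧ r = ∑ c ∈ hg.toFinset, c * κ (g ⁻¹' {c})}

lemma chargeIntegral_def (u : α → ℝ) : chargeIntegral κ u = sSup (LSet κ u) := rfl

lemma LSet_le (hκ : IsCharge κ) {u : α → ℝ} {A : Set α} {bi bo : ℝ}
    (hbi : ∀ x, u x ≤ bi) (hbo : ∀ x ∉ A, u x ≤ bo)
    {r : ℝ} (hr : r ∈ LSet κ u) : r ≤ bi * κ A + bo * κ Aᶜ := by
  obtain ⟨g, hg, hgu, rfl⟩ := hr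
  have key : ∀ c ∈ hg.toFinset, c * κ (g ⁻¹' {c}) ≤
      bi * κ (g ⁻¹' {c} ∩ A) + bo * κ (g ⁻¹' {c} ∩ Aᶜ) := by
    intro c _
    have hsplit : κ (g ⁻¹' {c}) = κ (g ⁻¹' {c} ∩ A) + κ (g ⁻¹' {c} ∩ Aᶜ) :=
      hκ.inter_add _ A
    rw [hsplit, mul_add]
    have h1 : c * κ (g ⁻¹' {c} ∩ A) ≤ bi * κ (g ⁻¹' {c} ∩ A) := by
      rcases (g ⁻¹' {c} ∩ A).eq_empty_or_nonempty with he | ⟨x, hx1, hx2⟩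
      · rw [he, hκ.empty]; simp
      · have hc : c ≤ bi := by
          have : g x = c := by simpa using hx1
          rw [← this]; exact (hgu x).trans (hbi x)
        exact mul_le_mul_of_nonneg_right hc (hκ.nonneg _)
    have h2 : c * κ (g ⁻¹' {c} ∩ Aᶜ) ≤ bo * κ (g ⁻¹' {c} ∩ Aᶜ) := by
      rcases (g ⁻¹' {c} ∩ Aᶜ).eq_empty_or_nonempty with he | ⟨x, hx1, hx2⟩
      · rw [he, hκ.empty]; simp
      · have hc : c ≤ bo := by
          have : g x = c := by simpa using hx1
          rw [← this]; exact (hgu x).trans (hbo x hx2)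
        exact mul_le_mul_of_nonneg_right hc (hκ.nonneg _)
    linarith
  calc ∑ c ∈ hg.toFinset, c * κ (g ⁻¹' {c})
      ≤ ∑ c ∈ hg.toFinset, (bi * κ (g ⁻¹' {c} ∩ A) + bo * κ (g ⁻¹' {c} ∩ Aᶜ)) :=
        Finset.sum_le_sum key
    _ = bi * ∑ c ∈ hg.toFinset, κ (g ⁻¹' {c} ∩ A)
        + bo * ∑ c ∈ hg.toFinset, κ (g ⁻¹' {c} ∩ Aᶜ) := by
        rw [Finset.sum_add_distrib, Finset.mul_sum, Finset.mul_sum]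
    _ = bi * κ A + bo * κ Aᶜ := by
        rw [charge_preimage_sum hκ, charge_preimage_sum hκ, hg.coe_toFinset,
          Set.preimage_range, Set.univ_inter, Set.univ_inter]

lemma zero_mem_LSet {u : α → ℝ} (h0 : ∀ x, 0 ≤ u x) : (0:ℝ) ∈ LSet κ u := by
  have hfin : (Set.range (fun _ : α => (0:ℝ))).Finite :=
    (Set.finite_singleton 0).subset (by rintro y ⟨x, rfl⟩; simp)
  refine ⟨fun _ => 0, hfin, h0, ?_⟩
  refine (Finset.sum_eq_zero ?_).symm
  intro c hc
  obtain ⟨x, hx⟩ := hfin.mem_toFinset.mp hc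
  simp [← hx]

lemma bddAbove_LSet (hκ : IsCharge κ) {u : α → ℝ} {B : ℝ} (hB : ∀ x, u x ≤ B) :
    BddAbove (LSet κ u) :=
  ⟨B * κ univ + B * κ univᶜ, fun _ hr =>
    LSet_le hκ hB (fun x hx => absurd (mem_univ x) hx) hr⟩

lemma chargeIntegral_le (hκ : IsCharge κ) {u : α → ℝ} {A : Set α} {bi bo : ℝ}
    (h0 : ∀ x, 0 ≤ u x) (hbi : ∀ x, u x ≤ bi) (hbo : ∀ x ∉ A, u x ≤ bo) :
    chargeIntegral κ u ≤ bi * κ A + bo * κ Aᶜ :=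
  csSup_le ⟨0, zero_mem_LSet h0⟩ (fun _ hr => LSet_le hκ hbi hbo hr)

lemma chargeIntegral_le_const (hκ : IsCharge κ) {u : α → ℝ} {b : ℝ}
    (h0 : ∀ x, 0 ≤ u x) (hbi : ∀ x, u x ≤ b) : chargeIntegral κ u ≤ b := by
  have := chargeIntegral_le (A := univ) (bo := 0) hκ h0 hbi
    (fun x hx => absurd (mem_univ x) hx)
  simpa [hκ.total, Set.compl_univ, hκ.empty] using this

lemma le_chargeIntegral (hκ : IsCharge κ) {u : α → ℝ} {B r : ℝ}
    (hB : ∀ x, u x ≤ B) (hr : r ∈ LSet κ u) : r ≤ chargeIntegral κ u :=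
  le_csSup (bddAbove_LSet hκ hB) hr

lemma chargeIntegral_nonneg (hκ : IsCharge κ) {u : α → ℝ} {B : ℝ}
    (h0 : ∀ x, 0 ≤ u x) (hB : ∀ x, u x ≤ B) : 0 ≤ chargeIntegral κ u :=
  le_chargeIntegral hκ hB (zero_mem_LSet h0)

lemma chargeIntegral_zero (hκ : IsCharge κ) : chargeIntegral κ (fun _ => (0:ℝ)) = 0 :=
  le_antisymm (chargeIntegral_le_const hκ (fun _ => le_rfl) (fun _ => le_rfl))
    (chargeIntegral_nonneg (B := 0) hκ (fun _ => le_rfl) (fun _ => le_rfl))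

-- sum over superset of the range
lemma sum_over_superset (hκ : IsCharge κ) {g : α → ℝ} (hg : (Set.range g).Finite)
    {s : Finset ℝ} (hs : Set.range g ⊆ ↑s) :
    ∑ c ∈ hg.toFinset, c * κ (g ⁻¹' {c}) = ∑ c ∈ s, c * κ (g ⁻¹' {c}) := by
  refine Finset.sum_subset (fun c hc => hs (hg.mem_toFinset.mp hc)) ?_
  intro c _ hc
  have : g ⁻¹' {c} = ∅ := by
    ext x; simp only [mem_preimage, mem_singleton_iff, mem_empty_iff_false, iff_false]
    intro hx; exact hc (hg.mem_toFinset.mpr ⟨x, hx⟩)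
  simp [this, hκ.empty]

lemma indicator_mem_LSet (hκ : IsCharge κ) {u : α → ℝ} {A : Set α} {b : ℝ}
    (hb : b ≠ 0) (h0 : ∀ x, 0 ≤ u x) (hA : ∀ x ∈ A, b ≤ u x) :
    b * κ A ∈ LSet κ u := by
  classical
  set g : α → ℝ := fun x => if x ∈ A then b else 0 with hgdef
  have hsub : Set.range g ⊆ ↑({0, b} : Finset ℝ) := by
    rintro y ⟨x, rfl⟩
    by_cases hx : x ∈ A <;> simp [g, hx]
  have hfin : (Set.range g).Finite := (Set.toFinite _).subset hsub
  refine ⟨g, hfin, ?_, ?_⟩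
  · intro x
    by_cases hx : x ∈ A
    · simpa [g, hx] using hA x hx
    · simpa [g, hx] using h0 x
  · rw [sum_over_superset hκ hfin hsub]
    have hpre : g ⁻¹' {b} = A := by
      ext x
      by_cases hx : x ∈ A <;> simp [g, hx, hb, Ne.symm hb]
    rw [Finset.sum_pair (Ne.symm hb)]
    simp [hpre]

open scoped Classical in
noncomputable def delta (a : α) : Set α → ℝ := fun E => if a ∈ E then 1 else 0

lemma delta_isCharge (a : α) : IsCharge (delta a) := by
  constructor
  · intro E; unfold delta; split <;> norm_num
  · simp [delta]
  · simp [delta]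
  · intro E G h
    unfold delta
    by_cases hE : a ∈ E
    · have hG : a ∉ G := fun hG => Set.disjoint_left.mp h hE hG
      simp [hE, hG]
    · by_cases hG : a ∈ G <;> simp [hE, hG]

lemma delta_sum (a : α) (g : α → ℝ) (hg : (Set.range g).Finite) :
    ∑ c ∈ hg.toFinset, c * delta a (g ⁻¹' {c}) = g a := by
  classical
  have h1 : ∀ c ∈ hg.toFinset, c * delta a (g ⁻¹' {c}) = if c = g a then c else 0 := by
    intro c _
    simp only [delta, mem_preimage, mem_singleton_iff, mul_ite, mul_one, mul_zero]
    by_cases h : g a = c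
    · simp [h, eq_comm]
    · rw [if_neg (fun hc : c = g a => h hc.symm)]; simp [h]
  rw [Finset.sum_congr rfl h1, Finset.sum_ite_eq' hg.toFinset (g a) (fun c => c)]
  simp [hg.mem_toFinset.mpr ⟨a, rfl⟩]

lemma chargeIntegral_delta (a : α) {u : α → ℝ} {B : ℝ}
    (h0 : ∀ x, 0 ≤ u x) (hB : ∀ x, u x ≤ B) :
    chargeIntegral (delta a) u = u a := by
  apply le_antisymm
  · refine csSup_le ⟨0, zero_mem_LSet h0⟩ ?_
    rintro r ⟨g, hg, hgu, rfl⟩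
    rw [delta_sum a g hg]
    exact hgu a
  · classical
    set g : α → ℝ := fun x => if x = a then u a else 0 with hgdef
    have hsub : Set.range g ⊆ ↑({0, u a} : Finset ℝ) := by
      rintro y ⟨x, rfl⟩
      by_cases hx : x = a <;> simp [g, hx]
    have hfin : (Set.range g).Finite := (Set.toFinite _).subset hsub
    have hmem : g a ∈ LSet (delta a) u := by
      refine ⟨g, hfin, ?_, (delta_sum a g hfin).symm⟩
      intro x
      by_cases hx : x = a
      · simp [g, hx]
      · simpa [g, hx] using h0 x
    have : g a = u a := by simp [g]
    exact this ▸ le_chargeIntegral (delta_isCharge a) hB hmem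

lemma charge_finset (hκ : IsCharge κ) (s : Finset α) : κ ↑s = ∑ a ∈ s, κ {a} := by
  classical
  induction s using Finset.induction with
  | empty => simp [hκ.empty]
  | insert _ _ hc ih =>
    rename_i a s
    rw [Finset.sum_insert hc, ← ih, Finset.coe_insert, Set.insert_eq, hκ.additive]
    simpa using hc

lemma charge_finite (hκ : IsCharge κ) {S : Set α} (hS : S.Finite) :
    κ S = ∑ a ∈ hS.toFinset, κ {a} := by
  rw [← charge_finset hκ, hS.coe_toFinset]

lemma diffuse_finite (hκ : IsCharge κ) (hd : ∀ a : α, κ {a} = 0) {S : Set α}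
    (hS : S.Finite) : κ S = 0 := by
  rw [charge_finite hκ hS]; simp [hd]

lemma exists_atom_of_pos (hκ : IsCharge κ) {S : Set α} (hS : S.Finite)
    (h : 0 < κ S) : ∃ a ∈ S, 0 < κ {a} := by
  by_contra hc
  push_neg at hc
  have : κ S = 0 := by
    rw [charge_finite hκ hS]
    refine Finset.sum_eq_zero fun a ha => ?_
    exact le_antisymm (hc a (hS.mem_toFinset.mp ha)) (hκ.nonneg _)
  linarith

/-- The atom-value lemma: if `u ≤ t` everywhere and `t ≤ ∫ u dκ`, then any atom `a`
of `κ` has `u a = t`. -/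
lemma atom_le (hκ : IsCharge κ) {u : α → ℝ} {t : ℝ}
    (h0 : ∀ x, 0 ≤ u x) (hub : ∀ x, u x ≤ t) (ht : t ≤ chargeIntegral κ u)
    {a : α} (ha : 0 < κ {a}) : t ≤ u a := by
  have hA : ∀ x ∉ ({a}ᶜ : Set α), u x ≤ u a := by
    intro x hx
    have : x = a := by simpa using hx
    exact le_of_eq (congrArg u this)
  have h1 := chargeIntegral_le (A := {a}ᶜ) hκ h0 hub hA
  rw [compl_compl, hκ.compl {a}] at h1
  nlinarith [hκ.nonneg {a}]


/-- The best-response value function. -/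
noncomputable def phi (κ : Set ℕ+ → ℝ) (m : ℕ+) : ℝ := 1 / ((m:ℕ) : ℝ) * κ {n : ℕ+ | n < m}

lemma phi_nonneg {κ : Set ℕ+ → ℝ} (hκ : IsCharge κ) (m : ℕ+) : 0 ≤ phi κ m := by
  have := hκ.nonneg {n : ℕ+ | n < m}
  have hm : (0:ℝ) < ((m:ℕ):ℝ) := by exact_mod_cast m.pos
  unfold phi; positivity

lemma phi_le_inv {κ : Set ℕ+ → ℝ} (hκ : IsCharge κ) (m : ℕ+) :
    phi κ m ≤ 1 / ((m:ℕ) : ℝ) := by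
  have hm : (0:ℝ) < ((m:ℕ):ℝ) := by exact_mod_cast m.pos
  have h1 := hκ.le_one {n : ℕ+ | n < m}
  calc phi κ m ≤ 1 / ((m:ℕ):ℝ) * 1 := by
        unfold phi; gcongr
    _ = 1 / ((m:ℕ):ℝ) := mul_one _

lemma phi_le_one {κ : Set ℕ+ → ℝ} (hκ : IsCharge κ) (m : ℕ+) : phi κ m ≤ 1 := by
  have hm : (1:ℝ) ≤ ((m:ℕ):ℝ) := by exact_mod_cast m.one_le
  refine (phi_le_inv hκ m).trans ?_
  rw [div_le_one (by linarith)]; linarith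

lemma inner_waldu {κ : Set ℕ+ → ℝ} (hκ : IsCharge κ) (m : ℕ+) :
    chargeIntegral κ (fun n => waldu m n) = phi κ m := by
  have hm : (0:ℝ) < ((m:ℕ):ℝ) := by exact_mod_cast m.pos
  have h0 : ∀ n, 0 ≤ waldu m n := by
    intro n; unfold waldu; split <;> positivity
  have hbi : ∀ n, waldu m n ≤ 1 / ((m:ℕ):ℝ) := by
    intro n; unfold waldu; split
    · exact le_rfl
    · positivity
  apply le_antisymm
  · have hbo : ∀ n ∉ {n : ℕ+ | n < m}, waldu m n ≤ 0 := by
      intro n hn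
      unfold waldu
      rw [if_neg (by simpa using hn)]
    have := chargeIntegral_le (A := {n : ℕ+ | n < m}) hκ h0 hbi hbo
    simpa [phi] using this
  · refine le_chargeIntegral hκ hbi (indicator_mem_LSet hκ (by positivity) h0 ?_)
    intro n hn
    unfold waldu
    rw [if_pos (by simpa using hn)]

lemma key {a b : Set ℕ+ → ℝ} (ha : IsCharge a) (hb : IsCharge b)
    (Ha : ∀ m : ℕ+, phi b m ≤ chargeIntegral a (phi b))
    (Hb : ∀ n : ℕ+, phi a n ≤ chargeIntegral b (phi a)) :
    Diffuse b := by
  by_contra hnd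
  obtain ⟨x, hx⟩ : ∃ x : ℕ+, b {x} ≠ 0 := not_forall.mp hnd
  have hx' : 0 < b {x} := (hb.nonneg _).lt_of_ne (Ne.symm hx)
  set v := chargeIntegral a (phi b) with hv
  -- v > 0
  have hxs : ({x} : Set ℕ+) ⊆ {n : ℕ+ | n < x + 1} := by
    intro n hn
    simp only [mem_singleton_iff] at hn
    simpa [hn] using PNat.lt_add_one_iff.mpr (le_refl x)
  have hphix : 0 < phi b (x + 1) := by
    have h1 : 0 < b {n : ℕ+ | n < x + 1} := lt_of_lt_of_le hx' (hb.mono hxs)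
    have h2 : (0:ℝ) < (((x+1:ℕ+):ℕ):ℝ) := by exact_mod_cast (x+1).pos
    unfold phi; positivity
  have hvpos : 0 < v := lt_of_lt_of_le hphix (Ha (x + 1))
  -- mass concentrates on A = {m | v/2 < phi b m}
  set A : Set ℕ+ := {m : ℕ+ | v / 2 < phi b m} with hA
  have hAmass : 1 ≤ a A := by
    have h1 := chargeIntegral_le (A := A) (bi := v) (bo := v / 2) ha
      (phi_nonneg hb) Ha (fun m hm => not_lt.mp (by simpa [hA] using hm))
    rw [ha.compl A] at h1
    nlinarith
  -- A is contained in an initial segment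
  set N : ℕ+ := ⟨Nat.ceil (2 / v) + 1, Nat.succ_pos _⟩ with hN
  have hAN : A ⊆ {m : ℕ+ | m < N} := by
    intro m hm
    have h1 : v / 2 < 1 / ((m:ℕ):ℝ) := lt_of_lt_of_le hm (phi_le_inv hb m)
    have hmpos : (0:ℝ) < ((m:ℕ):ℝ) := by exact_mod_cast m.pos
    have h2 : ((m:ℕ):ℝ) < 2 / v := by
      have h5 := (div_lt_div_iff₀ (by norm_num : (0:ℝ) < 2) hmpos).mp h1
      rw [lt_div_iff₀ hvpos]
      nlinarith
    have h3 : ((m:ℕ):ℝ) ≤ ((Nat.ceil (2 / v)):ℝ) := h2.le.trans (Nat.le_ceil _)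
    have h4 : (m:ℕ) < (N:ℕ) := by
      have : (m:ℕ) ≤ Nat.ceil (2 / v) := by exact_mod_cast h3
      simpa [hN] using Nat.lt_succ_of_le this
    simpa [Set.mem_setOf_eq] using (by exact_mod_cast h4 : m < N)
  -- hence player 2 can secure 1/N
  have hSN : 0 < a {m : ℕ+ | m < N} := lt_of_lt_of_le (by linarith) ((ha.mono hAN).trans' hAmass)
  set w := chargeIntegral b (phi a) with hw
  have hwpos : 0 < w := by
    refine lt_of_lt_of_le ?_ (Hb N)
    have h2 : (0:ℝ) < ((N:ℕ):ℝ) := by exact_mod_cast N.pos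
    unfold phi; positivity
  -- minimal atom descent
  set T : Set ℕ+ := {k : ℕ+ | 0 < a {k} ∨ 0 < b {k}} with hT
  obtain ⟨m₀, hm₀, hmin⟩ := wellFounded_lt.has_min T ⟨x, Or.inr hx'⟩
  have hIio : ({n : ℕ+ | n < m₀}).Finite := Set.finite_Iio m₀
  have hm₀pos : (0:ℝ) < ((m₀:ℕ):ℝ) := by exact_mod_cast m₀.pos
  rcases hm₀ with h | h
  · -- a has atom at m₀ : phi b m₀ = v > 0 forces b below m₀
    have h1 : v ≤ phi b m₀ :=
      atom_le ha (phi_nonneg hb) Ha le_rfl h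
    have h2 : 0 < b {n : ℕ+ | n < m₀} := by
      unfold phi at h1
      by_contra hc
      push_neg at hc
      have : 1 / ((m₀:ℕ):ℝ) * b {n : ℕ+ | n < m₀} ≤ 0 :=
        mul_nonpos_of_nonneg_of_nonpos (by positivity) hc
      linarith
    obtain ⟨k, hk, hk'⟩ := exists_atom_of_pos hb hIio h2
    exact hmin k (Or.inr hk') hk
  · have h1 : w ≤ phi a m₀ :=
      atom_le hb (phi_nonneg ha) Hb le_rfl h
    have h2 : 0 < a {n : ℕ+ | n < m₀} := by
      unfold phi at h1
      by_contra hc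
      push_neg at hc
      have : 1 / ((m₀:ℕ):ℝ) * a {n : ℕ+ | n < m₀} ≤ 0 :=
        mul_nonpos_of_nonneg_of_nonpos (by positivity) hc
      linarith
    obtain ⟨k, hk, hk'⟩ := exists_atom_of_pos ha hIio h2
    exact hmin k (Or.inl hk') hk


lemma U1_eq {κ₂ : Set ℕ+ → ℝ} (hκ₂ : IsCharge κ₂) (κ₁ : Set ℕ+ → ℝ) :
    U1 κ₁ κ₂ = chargeIntegral κ₁ (phi κ₂) := by
  unfold U1
  congr 1
  funext m
  exact inner_waldu hκ₂ m

lemma U2_eq {κ₁ : Set ℕ+ → ℝ} (hκ₁ : IsCharge κ₁) (κ₂ : Set ℕ+ → ℝ) :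
    U2 κ₁ κ₂ = chargeIntegral κ₂ (phi κ₁) := by
  unfold U2
  congr 1
  funext n
  exact inner_waldu hκ₁ n

lemma integral_phi_zero {κ τ : Set ℕ+ → ℝ} (hκ : IsCharge κ) (hτ : IsCharge τ)
    (hd : Diffuse κ) : chargeIntegral τ (phi κ) = 0 := by
  have : phi κ = fun _ => (0:ℝ) := by
    funext m
    unfold phi
    rw [diffuse_finite hκ hd (S := {n : ℕ+ | n < m}) (Set.finite_Iio m), mul_zero]
  rw [this, chargeIntegral_zero hτ]

lemma U1_zero {κ₁ κ₂ : Set ℕ+ → ℝ} (hκ₁ : IsCharge κ₁) (hκ₂ : IsCharge κ₂)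
    (hd : Diffuse κ₂) : U1 κ₁ κ₂ = 0 := by
  rw [U1_eq hκ₂ κ₁, integral_phi_zero hκ₂ hκ₁ hd]

lemma U2_zero {κ₁ κ₂ : Set ℕ+ → ℝ} (hκ₁ : IsCharge κ₁) (hκ₂ : IsCharge κ₂)
    (hd : Diffuse κ₁) : U2 κ₁ κ₂ = 0 := by
  rw [U2_eq hκ₁ κ₂, integral_phi_zero hκ₁ hκ₂ hd]

lemma nash_iff {κ₁ κ₂ : Set ℕ+ → ℝ} (h₁ : IsCharge κ₁) (h₂ : IsCharge κ₂) :
    NashEq κ₁ κ₂ ↔ (Diffuse κ₁ ∧ Diffuse κ₂) := by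
  constructor
  · rintro ⟨hn1, hn2⟩
    have Ha : ∀ m : ℕ+, phi κ₂ m ≤ chargeIntegral κ₁ (phi κ₂) := by
      intro m
      have e1 : phi κ₂ m = U1 (delta m) κ₂ := by
        rw [U1_eq h₂ (delta m),
          chargeIntegral_delta (B := 1) m (phi_nonneg h₂) (phi_le_one h₂)]
      rw [e1, ← U1_eq h₂ κ₁]
      exact hn1 (delta m) (delta_isCharge m)
    have Hb : ∀ n : ℕ+, phi κ₁ n ≤ chargeIntegral κ₂ (phi κ₁) := by
      intro n
      have e1 : phi κ₁ n = U2 κ₁ (delta n) := by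
        rw [U2_eq h₁ (delta n),
          chargeIntegral_delta (B := 1) n (phi_nonneg h₁) (phi_le_one h₁)]
      rw [e1, ← U2_eq h₁ κ₂]
      exact hn2 (delta n) (delta_isCharge n)
    exact ⟨key h₂ h₁ Hb Ha, key h₁ h₂ Ha Hb⟩
  · rintro ⟨hd1, hd2⟩
    constructor
    · intro τ hτ
      rw [U1_zero hτ h₂ hd2, U1_zero h₁ h₂ hd2]
    · intro τ hτ
      rw [U2_zero h₁ hτ hd1, U2_zero h₁ h₂ hd1]


end ChargeAux

/-- In the symmetric game on `ℕ × ℕ` with payoff `u₁(m,n) = 1/m` if `n < m` and `0`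
otherwise, played with charges: `(κ₁, κ₂)` is a Nash equilibrium iff both `κ₁` and `κ₂` are
diffuse; every Nash equilibrium yields payoff `0` to both players; and there is no Nash
equilibrium in countably additive strategies. -/
theorem wald_variant_equilibria :
    (∀ κ₁ κ₂ : Set ℕ+ → ℝ, IsCharge κ₁ → IsCharge κ₂ →
      (NashEq κ₁ κ₂ ↔ (Diffuse κ₁ ∧ Diffuse κ₂))) ∧
    (∀ κ₁ κ₂ : Set ℕ+ → ℝ, IsCharge κ₁ → IsCharge κ₂ → NashEq κ₁ κ₂ →
      U1 κ₁ κ₂ = 0 ∧ U2 κ₁ κ₂ = 0) ∧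
    (¬ ∃ κ₁ κ₂ : Set ℕ+ → ℝ, IsCharge κ₁ ∧ IsCharge κ₂ ∧
      CountablyAdditive κ₁ ∧ CountablyAdditive κ₂ ∧ NashEq κ₁ κ₂) := by
  refine ⟨fun κ₁ κ₂ h₁ h₂ => nash_iff h₁ h₂, ?_, ?_⟩
  · intro κ₁ κ₂ h₁ h₂ hN
    obtain ⟨hd1, hd2⟩ := (nash_iff h₁ h₂).mp hN
    exact ⟨U1_zero h₁ h₂ hd2, U2_zero h₁ h₂ hd1⟩
  · rintro ⟨κ₁, κ₂, h₁, h₂, hca1, hca2, hN⟩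
    have hd1 := ((nash_iff h₁ h₂).mp hN).1
    have e := hca1 Set.univ
    rw [h₁.total] at e
    have hz : ∀ k : (Set.univ : Set ℕ+), κ₁ {(k : ℕ+)} = 0 := fun k => hd1 k
    rw [tsum_congr hz, tsum_zero] at e
    norm_num at e
end

section
/- Let A be a set, F a field on A, and u : A → ℝ a bounded function that is a uniform limit of F-simple functions. Then for every charge κ on (A,F), the lower integral sup{κ(f) : f simple, f ≤ u} equals the upper integral inf{κ(g) : g simple, g ≥ u}; i.e., u is integrable with respect to every charge. Moreover, the map κ ↦ ∫ u dκ is continuous with respect to the topology of setwise (pointwise on F) convergence of charges. -/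
/-- A field of subsets of `A`. -/
structure IsSetField {A : Type*} (F : Set (Set A)) : Prop where
  empty_mem : ∅ ∈ F
  compl_mem : ∀ E ∈ F, Eᶜ ∈ F
  union_mem : ∀ E ∈ F, ∀ G ∈ F, E ∪ G ∈ F

/-- A finitely additive probability measure (charge) on the field `F`. -/
structure IsChargeOn {A : Type*} (F : Set (Set A)) (σ : Set A → ℝ) : Prop where
  nonneg : ∀ E ∈ F, 0 ≤ σ E
  empty : σ ∅ = 0
  total : σ Set.univ = 1
  additive : ∀ E ∈ F, ∀ G ∈ F, Disjoint E G → σ (E ∪ G) = σ E + σ G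

section Aux
variable {A : Type*} {ι : Type*} {F : Set (Set A)} {κ : Set A → ℝ}

lemma aux_univ_mem (hF : IsSetField F) : Set.univ ∈ F := by
  simpa using hF.compl_mem ∅ hF.empty_mem

lemma aux_inter_mem (hF : IsSetField F) {E G : Set A} (hE : E ∈ F) (hG : G ∈ F) :
    E ∩ G ∈ F := by
  have := hF.compl_mem _ (hF.union_mem _ (hF.compl_mem E hE) _ (hF.compl_mem G hG))
  simpa [Set.compl_union] using this

lemma aux_biUnion_mem (hF : IsSetField F) (s : Finset ι) (T : ι → Set A)
    (h : ∀ i ∈ s, T i ∈ F) : (⋃ i ∈ s, T i) ∈ F := by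
  classical
  induction s using Finset.induction with
  | empty => simpa using hF.empty_mem
  | @insert a s ha ih =>
    rw [Finset.set_biUnion_insert]
    exact hF.union_mem _ (h a (Finset.mem_insert_self a s)) _
      (ih fun i hi => h i (Finset.mem_insert_of_mem hi))

lemma aux_sum_charge (hF : IsSetField F) (hκ : IsChargeOn F κ) (s : Finset ι) (T : ι → Set A)
    (hT : ∀ i ∈ s, T i ∈ F)
    (hd : ∀ i ∈ s, ∀ j ∈ s, i ≠ j → Disjoint (T i) (T j)) :
    κ (⋃ i ∈ s, T i) = ∑ i ∈ s, κ (T i) := by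
  classical
  induction s using Finset.induction with
  | empty => simpa using hκ.empty
  | @insert a s ha ih =>
    rw [Finset.set_biUnion_insert, Finset.sum_insert ha,
      hκ.additive _ (hT a (Finset.mem_insert_self a s)) _
        (aux_biUnion_mem hF s T fun i hi => hT i (Finset.mem_insert_of_mem hi))
        (by
          rw [Set.disjoint_iUnion_right]
          intro i
          rw [Set.disjoint_iUnion_right]
          intro hi
          exact hd a (Finset.mem_insert_self a s) i (Finset.mem_insert_of_mem hi)
            (fun h => ha (h ▸ hi)))]
    rw [ih (fun i hi => hT i (Finset.mem_insert_of_mem hi))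
      (fun i hi j hj hij => hd i (Finset.mem_insert_of_mem hi) j (Finset.mem_insert_of_mem hj) hij)]

lemma aux_partition (hF : IsSetField F) (hκ : IsChargeOn F κ) (g : A → ℝ)
    (hg : (Set.range g).Finite) (hgF : ∀ c : ℝ, g ⁻¹' {c} ∈ F)
    {E : Set A} (hE : E ∈ F) :
    κ E = ∑ d ∈ hg.toFinset, κ (E ∩ g ⁻¹' {d}) := by
  have hcover : E = ⋃ d ∈ hg.toFinset, E ∩ g ⁻¹' {d} := by
    ext a
    simp only [Set.mem_iUnion, Set.Finite.mem_toFinset, Set.mem_range, Set.mem_inter_iff,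
      Set.mem_preimage, Set.mem_singleton_iff]
    constructor
    · intro ha; exact ⟨g a, ⟨a, rfl⟩, ha, rfl⟩
    · rintro ⟨d, -, ha, -⟩; exact ha
  have hd : ∀ i ∈ hg.toFinset, ∀ j ∈ hg.toFinset, i ≠ j →
      Disjoint (E ∩ g ⁻¹' {i}) (E ∩ g ⁻¹' {j}) := by
    intro i _ j _ hij
    refine Set.disjoint_left.2 ?_
    rintro a ⟨-, ha⟩ ⟨-, hb⟩
    exact hij (ha.symm.trans hb)
  have key := aux_sum_charge hF hκ hg.toFinset (fun d => E ∩ g ⁻¹' {d})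
    (fun d _ => aux_inter_mem hF hE (hgF d)) hd
  rw [← hcover] at key
  exact key

lemma aux_total_sum (hF : IsSetField F) (hκ : IsChargeOn F κ) (f : A → ℝ)
    (hf : (Set.range f).Finite) (hfF : ∀ c : ℝ, f ⁻¹' {c} ∈ F) :
    ∑ c ∈ hf.toFinset, κ (f ⁻¹' {c}) = 1 := by
  have := aux_partition hF hκ f hf hfF (aux_univ_mem hF)
  simpa [hκ.total, Set.univ_inter] using this.symm

lemma aux_mono (hF : IsSetField F) (hκ : IsChargeOn F κ)
    (f g : A → ℝ) (hf : (Set.range f).Finite) (hg : (Set.range g).Finite)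
    (hfF : ∀ c : ℝ, f ⁻¹' {c} ∈ F) (hgF : ∀ c : ℝ, g ⁻¹' {c} ∈ F)
    (hle : ∀ a, f a ≤ g a) :
    ∑ c ∈ hf.toFinset, c * κ (f ⁻¹' {c}) ≤ ∑ d ∈ hg.toFinset, d * κ (g ⁻¹' {d}) := by
  calc ∑ c ∈ hf.toFinset, c * κ (f ⁻¹' {c})
      = ∑ c ∈ hf.toFinset, ∑ d ∈ hg.toFinset, c * κ (f ⁻¹' {c} ∩ g ⁻¹' {d}) := by
        refine Finset.sum_congr rfl fun c _ => ?_
        rw [aux_partition hF hκ g hg hgF (hfF c), Finset.mul_sum]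
    _ ≤ ∑ c ∈ hf.toFinset, ∑ d ∈ hg.toFinset, d * κ (f ⁻¹' {c} ∩ g ⁻¹' {d}) := by
        refine Finset.sum_le_sum fun c _ => Finset.sum_le_sum fun d _ => ?_
        rcases Set.eq_empty_or_nonempty (f ⁻¹' {c} ∩ g ⁻¹' {d}) with h | h
        · rw [h, hκ.empty]; simp
        · obtain ⟨a, ha, hb⟩ := h
          have hcd : c ≤ d := by
            simp only [Set.mem_preimage, Set.mem_singleton_iff] at ha hb
            rw [← ha, ← hb]; exact hle a
          exact mul_le_mul_of_nonneg_right hcd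
            (hκ.nonneg _ (aux_inter_mem hF (hfF c) (hgF d)))
    _ = ∑ d ∈ hg.toFinset, d * κ (g ⁻¹' {d}) := by
        rw [Finset.sum_comm]
        refine Finset.sum_congr rfl fun d _ => ?_
        rw [← Finset.mul_sum]
        congr 1
        rw [aux_partition hF hκ f hf hfF (hgF d)]
        exact Finset.sum_congr rfl fun c _ => by rw [Set.inter_comm]

lemma aux_shift (hF : IsSetField F) (hκ : IsChargeOn F κ) (f : A → ℝ)
    (hf : (Set.range f).Finite) (hfF : ∀ c : ℝ, f ⁻¹' {c} ∈ F) (t : ℝ)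
    (hf' : (Set.range (fun a => f a + t)).Finite) :
    ∑ c ∈ hf'.toFinset, c * κ ((fun a => f a + t) ⁻¹' {c})
      = (∑ c ∈ hf.toFinset, c * κ (f ⁻¹' {c})) + t := by
  classical
  have hrange : hf'.toFinset = Finset.image (· + t) hf.toFinset := by
    ext c
    simp only [Set.Finite.mem_toFinset, Set.mem_range, Finset.mem_image]
    constructor
    · rintro ⟨a, rfl⟩; exact ⟨f a, ⟨a, rfl⟩, rfl⟩
    · rintro ⟨d, ⟨a, rfl⟩, rfl⟩; exact ⟨a, rfl⟩
  rw [hrange, Finset.sum_image (fun x _ y _ h => by linarith)]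
  have hpre : ∀ c : ℝ, (fun a => f a + t) ⁻¹' {c + t} = f ⁻¹' {c} := by
    intro c; ext a
    simp only [Set.mem_preimage, Set.mem_singleton_iff]
    constructor <;> intro h <;> linarith
  simp_rw [hpre]
  have hsplit : ∑ c ∈ hf.toFinset, (c + t) * κ (f ⁻¹' {c})
      = ∑ c ∈ hf.toFinset, c * κ (f ⁻¹' {c}) + t * ∑ c ∈ hf.toFinset, κ (f ⁻¹' {c}) := by
    rw [Finset.mul_sum, ← Finset.sum_add_distrib]
    exact Finset.sum_congr rfl fun c _ => by ring
  rw [hsplit, aux_total_sum hF hκ f hf hfF, mul_one]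

end Aux

/-- The set of integrals `κ(f)` of `F`-simple functions `f ≤ u` (lower sums). -/
def lowerInts {A : Type*} (F : Set (Set A)) (u : A → ℝ) (κ : Set A → ℝ) : Set ℝ :=
  {r | ∃ f : A → ℝ, ∃ hf : (Set.range f).Finite, (∀ c : ℝ, f ⁻¹' {c} ∈ F) ∧
    (∀ a, f a ≤ u a) ∧ r = ∑ c ∈ hf.toFinset, c * κ (f ⁻¹' {c})}

/-- The set of integrals `κ(g)` of `F`-simple functions `g ≥ u` (upper sums). -/
def upperInts {A : Type*} (F : Set (Set A)) (u : A → ℝ) (κ : Set A → ℝ) : Set ℝ :=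
  {r | ∃ g : A → ℝ, ∃ hg : (Set.range g).Finite, (∀ c : ℝ, g ⁻¹' {c} ∈ F) ∧
    (∀ a, u a ≤ g a) ∧ r = ∑ c ∈ hg.toFinset, c * κ (g ⁻¹' {c})}

section Aux2
variable {A : Type*} {F : Set (Set A)} {κ : Set A → ℝ}

lemma aux_shift_range (f : A → ℝ) (hf : (Set.range f).Finite) (t : ℝ) :
    (Set.range (fun a => f a + t)).Finite := by
  refine (hf.image (· + t)).subset ?_
  rintro _ ⟨a, rfl⟩
  exact ⟨f a, ⟨a, rfl⟩, rfl⟩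

lemma aux_shift_pre (hF : IsSetField F) (f : A → ℝ) (hfF : ∀ c : ℝ, f ⁻¹' {c} ∈ F) (t : ℝ) :
    ∀ c : ℝ, (fun a => f a + t) ⁻¹' {c} ∈ F := by
  intro c
  have : (fun a => f a + t) ⁻¹' {c} = f ⁻¹' {c - t} := by
    ext a
    simp only [Set.mem_preimage, Set.mem_singleton_iff]
    constructor <;> intro h <;> linarith
  rw [this]; exact hfF _

lemma aux_bounds (hF : IsSetField F) (hκ : IsChargeOn F κ) (u : A → ℝ) (f : A → ℝ)
    (hf : (Set.range f).Finite) (hfF : ∀ c : ℝ, f ⁻¹' {c} ∈ F) {ε : ℝ} (hε : 0 < ε)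
    (happ : ∀ a, |u a - f a| < ε) :
    ((∑ c ∈ hf.toFinset, c * κ (f ⁻¹' {c})) - ε ∈ lowerInts F u κ) ∧
    ((∑ c ∈ hf.toFinset, c * κ (f ⁻¹' {c})) + ε ∈ upperInts F u κ) := by
  constructor
  · refine ⟨fun a => f a + (-ε), aux_shift_range f hf (-ε), aux_shift_pre hF f hfF (-ε),
      fun a => ?_, ?_⟩
    · show f a + -ε ≤ u a
      have := (abs_lt.1 (happ a)).1; linarith
    · rw [aux_shift hF hκ f hf hfF (-ε) (aux_shift_range f hf (-ε))]; ring
  · refine ⟨fun a => f a + ε, aux_shift_range f hf ε, aux_shift_pre hF f hfF ε,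
      fun a => ?_, ?_⟩
    · show u a ≤ f a + ε
      have := (abs_lt.1 (happ a)).2; linarith
    · rw [aux_shift hF hκ f hf hfF ε (aux_shift_range f hf ε)]

lemma aux_lower_le_upper (hF : IsSetField F) (hκ : IsChargeOn F κ) (u : A → ℝ)
    {r s : ℝ} (hr : r ∈ lowerInts F u κ) (hs : s ∈ upperInts F u κ) : r ≤ s := by
  obtain ⟨f, hf, hfF, hfle, rfl⟩ := hr
  obtain ⟨g, hg, hgF, hgle, rfl⟩ := hs
  exact aux_mono hF hκ f g hf hg hfF hgF (fun a => (hfle a).trans (hgle a))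

lemma aux_sSup_close (hF : IsSetField F) (hκ : IsChargeOn F κ) (u : A → ℝ) (f : A → ℝ)
    (hf : (Set.range f).Finite) (hfF : ∀ c : ℝ, f ⁻¹' {c} ∈ F) {ε : ℝ} (hε : 0 < ε)
    (happ : ∀ a, |u a - f a| < ε) :
    |sSup (lowerInts F u κ) - ∑ c ∈ hf.toFinset, c * κ (f ⁻¹' {c})| ≤ ε := by
  obtain ⟨hL, hU⟩ := aux_bounds hF hκ u f hf hfF hε happ
  have hbdd : BddAbove (lowerInts F u κ) :=
    ⟨_, fun r hr => aux_lower_le_upper hF hκ u hr hU⟩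
  have h1 : (∑ c ∈ hf.toFinset, c * κ (f ⁻¹' {c})) - ε ≤ sSup (lowerInts F u κ) :=
    le_csSup hbdd hL
  have h2 : sSup (lowerInts F u κ) ≤ (∑ c ∈ hf.toFinset, c * κ (f ⁻¹' {c})) + ε :=
    csSup_le ⟨_, hL⟩ (fun r hr => aux_lower_le_upper hF hκ u hr hU)
  rw [abs_le]
  constructor <;> linarith

end Aux2

/-- Let `u : A → ℝ` be bounded and a uniform limit of `F`-simple functions. Then, for every
charge `κ` on `(A, F)`, the lower integral equals the upper integral (`u` is integrable with
respect to every charge), and the map `κ ↦ ∫ u dκ` is continuous in the topology of setwise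
(pointwise on `F`) convergence of charges. -/
theorem uniform_limit_integrable_and_integral_continuous
    {A : Type*} (F : Set (Set A)) (hF : IsSetField F) (u : A → ℝ)
    (M : ℝ) (hb : ∀ a, |u a| ≤ M)
    (hu : ∀ ε : ℝ, 0 < ε → ∃ f : A → ℝ, (Set.range f).Finite ∧
      (∀ c : ℝ, f ⁻¹' {c} ∈ F) ∧ ∀ a, |u a - f a| < ε) :
    (∀ κ : Set A → ℝ, IsChargeOn F κ →
      sSup (lowerInts F u κ) = sInf (upperInts F u κ)) ∧
    @Continuous {κ : Set A → ℝ // IsChargeOn F κ} ℝ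
      (TopologicalSpace.induced
        (fun κ : {κ : Set A → ℝ // IsChargeOn F κ} => (fun E : F => κ.1 E.1))
        Pi.topologicalSpace)
      inferInstance
      (fun κ => sSup (lowerInts F u κ.1)) := by
  classical
  constructor
  · intro κ hκ
    obtain ⟨f1, hf1, hf1F, happ1⟩ := hu 1 one_pos
    obtain ⟨hL1, hU1⟩ := aux_bounds hF hκ u f1 hf1 hf1F one_pos happ1
    have hneL : (lowerInts F u κ).Nonempty := ⟨_, hL1⟩
    have hneU : (upperInts F u κ).Nonempty := ⟨_, hU1⟩
    have hbddB : BddBelow (upperInts F u κ) :=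
      ⟨_, fun s hs => aux_lower_le_upper hF hκ u hL1 hs⟩
    have h1 : sSup (lowerInts F u κ) ≤ sInf (upperInts F u κ) :=
      csSup_le hneL fun r hr => le_csInf hneU fun s hs => aux_lower_le_upper hF hκ u hr hs
    have h2 : sInf (upperInts F u κ) ≤ sSup (lowerInts F u κ) := by
      refine le_of_forall_pos_le_add fun ε hε => ?_
      obtain ⟨f, hf, hfF, happ⟩ := hu (ε / 2) (by linarith)
      obtain ⟨hL, hU⟩ := aux_bounds hF hκ u f hf hfF (by linarith : (0:ℝ) < ε / 2) happ
      have hbdd : BddAbove (lowerInts F u κ) :=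
        ⟨_, fun r hr => aux_lower_le_upper hF hκ u hr hU⟩
      have hle1 : sInf (upperInts F u κ) ≤ (∑ c ∈ hf.toFinset, c * κ (f ⁻¹' {c})) + ε / 2 :=
        csInf_le hbddB hU
      have hle2 : (∑ c ∈ hf.toFinset, c * κ (f ⁻¹' {c})) - ε / 2 ≤ sSup (lowerInts F u κ) :=
        le_csSup hbdd hL
      linarith
    linarith
  · letI T : TopologicalSpace {κ : Set A → ℝ // IsChargeOn F κ} :=
      TopologicalSpace.induced
        (fun κ : {κ : Set A → ℝ // IsChargeOn F κ} => (fun E : F => κ.1 E.1))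
        Pi.topologicalSpace
    have H : ∀ n : ℕ, ∃ f : A → ℝ, (Set.range f).Finite ∧
        (∀ c : ℝ, f ⁻¹' {c} ∈ F) ∧ ∀ a, |u a - f a| < 1 / (n + 1) := fun n =>
      hu (1 / (n + 1)) (by positivity)
    choose f hfin hmem happ using H
    set G : ℕ → {κ : Set A → ℝ // IsChargeOn F κ} → ℝ := fun n κ =>
      ∑ c ∈ (hfin n).toFinset, c * κ.1 ((f n) ⁻¹' {c}) with hG
    have hcontG : ∀ n, Continuous (G n) := by
      intro n
      refine continuous_finset_sum _ fun c _ => ?_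
      have h1 : Continuous (fun κ : {κ : Set A → ℝ // IsChargeOn F κ} =>
          (fun E : F => κ.1 E.1)) := continuous_induced_dom
      have h2 : Continuous (fun κ : {κ : Set A → ℝ // IsChargeOn F κ} =>
          κ.1 ((f n) ⁻¹' {c})) :=
        (continuous_apply (⟨(f n) ⁻¹' {c}, hmem n c⟩ : F)).comp h1
      exact continuous_const.mul h2
    have hunif : TendstoUniformly G
        (fun κ : {κ : Set A → ℝ // IsChargeOn F κ} => sSup (lowerInts F u κ.1))
        Filter.atTop := by
      rw [Metric.tendstoUniformly_iff]
      intro δ hδ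
      obtain ⟨N, hN⟩ := exists_nat_one_div_lt hδ
      filter_upwards [Filter.eventually_ge_atTop N] with n hn κ
      have hclose := aux_sSup_close hF κ.2 u (f n) (hfin n) (hmem n)
        (by positivity : (0:ℝ) < 1 / (n + 1)) (happ n)
      have hmono : (1 : ℝ) / (n + 1) ≤ 1 / (N + 1) := by
        apply one_div_le_one_div_of_le (by positivity)
        have : (N : ℝ) ≤ n := by exact_mod_cast hn
        linarith
      rw [Real.dist_eq]
      calc |sSup (lowerInts F u κ.1) - G n κ| ≤ 1 / (n + 1) := hclose
        _ ≤ 1 / (N + 1) := hmono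
        _ < δ := hN
    exact hunif.continuous (Filter.Eventually.of_forall hcontG).frequently
end
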